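/- arXiv:2104.07090 — 8 statements merged into one kernel-verified Lean document; each statement's English description precedes it below -/
import Mathlib

section
/- Let (A_0, A_1, ∂_0, ∂_1, s) be a 1-truncated simplicial ring (rings A_0, A_1 with ring homomorphisms ∂_0, ∂_1 : A_1 → A_0 and s : A_0 → A_1 satisfying ∂_0∘s = ∂_1∘s = id) such that (Ker ∂_0)·(Ker ∂_1) = 0. Set C := A_0, I := Ker ∂_0, d := ∂_1|_I, with the C-module structure on I given via s. Then (I,d) is a quasi-ideal in C, i.e., d is C-linear and d(x)·y = d(y)·x for all x,y ∈ I. -/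
/-- Let `(A₀, A₁, ∂₀, ∂₁, s)` be a 1-truncated simplicial
commutative ring (`∂₀, ∂₁ : A₁ →+* A₀`, `s : A₀ →+* A₁`, `∂₀ ∘ s = ∂₁ ∘ s = id`)
such that `(Ker ∂₀) · (Ker ∂₁) = 0`.  Set `C := A₀`, `I := Ker ∂₀`,
`d := ∂₁|_I`, with the `C`-module structure on `I` given by `c • x := s(c) * x`.
Then `(I, d)` is a quasi-ideal in `C`: `d` is `C`-linear, i.e.
`∂₁ (s c * x) = c * ∂₁ x`, and `d(x)·y = d(y)·x`, i.e.
`s (∂₁ x) * y = s (∂₁ y) * x` for all `x, y ∈ Ker ∂₀`. -/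
theorem trunc_simplicial_ring_gives_quasiIdeal
    (A0 A1 : Type) [CommRing A0] [CommRing A1]
    (d0 d1 : A1 →+* A0) (s : A0 →+* A1)
    (hs0 : ∀ a, d0 (s a) = a) (hs1 : ∀ a, d1 (s a) = a)
    (hgood : ∀ x y : A1, d0 x = 0 → d1 y = 0 → x * y = 0) :
    (∀ (c : A0) (x : A1), d1 (s c * x) = c * d1 x) ∧
    (∀ x y : A1, d0 x = 0 → d0 y = 0 → s (d1 x) * y = s (d1 y) * x) := by
  constructor
  · intro c x
    rw [map_mul, hs1]
  · intro x y hx hy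
    have key : ∀ a b : A1, d0 a = 0 → d0 b = 0 → a * b = s (d1 a) * b := by
      intro a b ha hb
      have h1 : d0 (b) = 0 := hb
      have h2 : d1 (a - s (d1 a)) = 0 := by simp [hs1]
      have := hgood b (a - s (d1 a)) h1 h2
      have : b * a - b * s (d1 a) = 0 := by rw [← mul_sub]; exact this
      have := sub_eq_zero.mp this
      linear_combination this
    rw [← key x y hx hy, ← key y x hy hx, mul_comm]
end

section
/- Let (C, I, d) be a quasi-ideal. Define A_0 := C, A_1 := C ⊕ I with multiplication (c,x)(c',x') := (cc', cx' + c'x + x·dx'), s(c) := (c,0), ∂_0(c,x) := c, ∂_1(c,x) := c + dx. Then A_1 is a commutative ring, s, ∂_0, ∂_1 are ring homomorphisms with ∂_0∘s = ∂_1∘s = id, and (Ker ∂_0)·(Ker ∂_1) = 0. -/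
/-- The multiplication on `A₁ := C ⊕ I` attached to a quasi-ideal `(I, d)` in `C`:
`(c, x) * (c', x') := (c c', c • x' + c' • x + x · d x')`, where `x · d x'`
denotes the module action of `d x' ∈ C` on `x ∈ I`. -/
def qmul {C I : Type} [CommRing C] [AddCommGroup I] [Module C I]
    (d : I →ₗ[C] C) (p q : C × I) : C × I :=
  (p.1 * q.1, p.1 • q.2 + q.1 • p.2 + d q.2 • p.2)

/-- Let `(C, I, d)` be a quasi-ideal.  Define `A₀ := C`,
`A₁ := C ⊕ I` with the multiplication `qmul` above, `s c := (c, 0)`,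
`∂₀ (c, x) := c`, `∂₁ (c, x) := c + d x`.  Then `A₁` is a commutative ring
(the multiplication is commutative, associative, unital with unit `(1,0)` and
distributes over the componentwise addition), `s`, `∂₀`, `∂₁` are ring
homomorphisms (additivity being obvious, we record multiplicativity and that
`s` sends `1` to the unit), `∂₀ ∘ s = ∂₁ ∘ s = id`, and
`(Ker ∂₀) · (Ker ∂₁) = 0`. -/
theorem quasiIdeal_gives_trunc_simplicial_ring
    (C : Type) [CommRing C] (I : Type) [AddCommGroup I] [Module C I]
    (d : I →ₗ[C] C) (hq : ∀ x y : I, d x • y = d y • x) :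
    -- `A₁` is a commutative ring:
    (∀ p q : C × I, qmul d p q = qmul d q p) ∧
    (∀ p q r : C × I, qmul d (qmul d p q) r = qmul d p (qmul d q r)) ∧
    (∀ p q r : C × I, qmul d p (q + r) = qmul d p q + qmul d p r) ∧
    (∀ p q r : C × I, qmul d (p + q) r = qmul d p r + qmul d q r) ∧
    (∀ p : C × I, qmul d (1, 0) p = p) ∧
    -- `s` is a ring homomorphism:
    (∀ c c' : C, qmul d (c, 0) (c', 0) = (c * c', 0)) ∧
    -- `∂₀` is multiplicative:
    (∀ p q : C × I, (qmul d p q).1 = p.1 * q.1) ∧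
    -- `∂₁` is multiplicative:
    (∀ p q : C × I, (qmul d p q).1 + d (qmul d p q).2
        = (p.1 + d p.2) * (q.1 + d q.2)) ∧
    -- `∂₀ ∘ s = ∂₁ ∘ s = id`:
    (∀ c : C, ((c, (0 : I)) : C × I).1 = c) ∧
    (∀ c : C, c + d 0 = c) ∧
    -- `(Ker ∂₀) · (Ker ∂₁) = 0`:
    (∀ p q : C × I, p.1 = 0 → q.1 + d q.2 = 0 → qmul d p q = 0) := by
  refine ⟨?_, ?_, ?_, ?_, ?_, ?_, ?_, ?_, ?_, ?_, ?_⟩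
  · intro p q
    simp only [qmul, Prod.mk.injEq]
    exact ⟨mul_comm _ _, by rw [hq q.2 p.2]; abel⟩
  · intro p q r
    simp only [qmul, Prod.mk.injEq, smul_add, map_add, map_smul, smul_smul,
      add_smul, smul_eq_mul]
    constructor
    · ring
    · module
  · intro p q r
    simp only [qmul, Prod.ext_iff, Prod.fst_add, Prod.snd_add, map_add, smul_add, add_smul]
    constructor
    · ring
    · abel
  · intro p q r
    simp only [qmul, Prod.ext_iff, Prod.fst_add, Prod.snd_add, map_add, smul_add, add_smul]
    constructor
    · ring
    · abel
  · intro p; simp [qmul]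
  · intro c c'; simp [qmul]
  · intro p q; rfl
  · intro p q
    simp only [qmul, map_add, map_smul, smul_eq_mul]
    ring
  · intro c; rfl
  · intro c; simp
  · intro p q h1 h2
    have h3 : d q.2 = -q.1 := by rwa [add_comm, add_eq_zero_iff_eq_neg] at h2
    simp only [qmul, h1, h3, Prod.ext_iff, Prod.fst_zero, Prod.snd_zero,
      zero_mul, zero_smul, neg_smul, zero_add]
    exact ⟨trivial, by abel⟩
end

section
/- Let (A_0, A_1, ∂_0, ∂_1, s) be a 1-truncated simplicial commutative ring, and let B := {(f,g) ∈ A_1 × A_1 : ∂_1(f) = ∂_0(g)} with its ring structure as a subring of A_1 × A_1. The map φ : B → A_1 given by φ(f,g) := f + g − s(∂_1(f)) is a ring homomorphism if and only if (Ker ∂_0)·(Ker ∂_1) = 0. -/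
/-- Let `(A₀, A₁, ∂₀, ∂₁, s)` be a 1-truncated simplicial
commutative ring, and let `B := {(f, g) ∈ A₁ × A₁ : ∂₁ f = ∂₀ g}` with its
ring structure as a subring of `A₁ × A₁`.  The map `φ : B → A₁`,
`φ (f, g) := f + g − s (∂₁ f)`, is a ring homomorphism (additive,
multiplicative and unital on `B`) if and only if
`(Ker ∂₀) · (Ker ∂₁) = 0`. -/
theorem comp_ringHom_iff_good
    (A0 A1 : Type) [CommRing A0] [CommRing A1]
    (d0 d1 : A1 →+* A0) (s : A0 →+* A1)
    (hs0 : ∀ a, d0 (s a) = a) (hs1 : ∀ a, d1 (s a) = a) :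
    let φ : A1 × A1 → A1 := fun p => p.1 + p.2 - s (d1 p.1)
    ((∀ p q : A1 × A1, d1 p.1 = d0 p.2 → d1 q.1 = d0 q.2 →
        φ (p * q) = φ p * φ q) ∧
     (∀ p q : A1 × A1, d1 p.1 = d0 p.2 → d1 q.1 = d0 q.2 →
        φ (p + q) = φ p + φ q) ∧
     φ (1, 1) = 1)
    ↔ (∀ x y : A1, d0 x = 0 → d1 y = 0 → x * y = 0) := by
  intro φ
  constructor
  · rintro ⟨hmul, -, -⟩ x y hx hy
    have := hmul (y, 0) (0, x) (by simp [hy]) (by simp [hx])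
    simp only [φ, Prod.mk_mul_mk, mul_zero, zero_mul, Prod.fst, Prod.snd,
      hy, map_zero, map_mul] at this
    -- this : 0 + 0 - s 0 = (y + 0 - s (d1 y)) * (0 + x - s (d1 0))
    have h2 : (0 : A1) = y * x := by
      simpa [hy] using this
    rw [mul_comm]; exact h2.symm
  · intro H
    refine ⟨?_, ?_, ?_⟩
    · rintro ⟨a, b⟩ ⟨c, d⟩ hp hq
      simp only [φ, Prod.mk_mul_mk, map_mul]
      have h1 : (b - s (d1 a)) * (c - s (d1 c)) = 0 := by
        apply H
        · simp [map_sub, ← hp, hs0]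
        · simp [map_sub, hs1]
      have h2 : (d - s (d1 c)) * (a - s (d1 a)) = 0 := by
        apply H
        · simp [map_sub, ← hq, hs0]
        · simp [map_sub, hs1]
      have key : (a * c + b * d - s (d1 a) * s (d1 c)) -
          (a + b - s (d1 a)) * (c + d - s (d1 c)) =
          -((b - s (d1 a)) * (c - s (d1 c)) + (d - s (d1 c)) * (a - s (d1 a))) := by
        ring
      rw [h1, h2] at key
      simp only [map_mul] at *
      linear_combination key
    · rintro ⟨a, b⟩ ⟨c, d⟩ _ _
      simp only [φ, Prod.mk_add_mk, map_add]
      ring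
    · simp [φ]
end

section
/- Every morphism in the category of admissible correspondences Corr_adm(R_1, R_2) between objects R_1, R_2 of DGRings^{0,-1} is an isomorphism; i.e., Corr_adm(R_1, R_2) is a groupoid. -/
/-- A morphism of objects of `DGRings^{0,-1}` (equivalently, of quasi-ideals):
a ring homomorphism in degree `0` and an additive map in degree `-1`,
compatible with the module structures and the differentials. -/
def IsDGHom {C I : Type} [CommRing C] [AddCommGroup I] [Module C I]
    (d : I →ₗ[C] C)
    {C' I' : Type} [CommRing C'] [AddCommGroup I'] [Module C' I']
    (d' : I' →ₗ[C'] C') (fC : C →+* C') (fI : I →+ I') : Prop :=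
  (∀ (c : C) (x : I), fI (c • x) = fC c • fI x) ∧
  (∀ x : I, d' (fI x) = fC (d x))

/-- `f` is a quasi-isomorphism in `DGRings^{0,-1}`: it induces isomorphisms
`Ker d ≅ Ker d'` and `Coker d ≅ Coker d'`. -/
def IsQuasiIso {C I : Type} [CommRing C] [AddCommGroup I] [Module C I]
    (d : I →ₗ[C] C)
    {C' I' : Type} [CommRing C'] [AddCommGroup I'] [Module C' I']
    (d' : I' →ₗ[C'] C') (fC : C →+* C') (fI : I →+ I') : Prop :=
  (∀ x : I, d x = 0 → fI x = 0 → x = 0) ∧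
  (∀ x' : I', d' x' = 0 → ∃ x : I, d x = 0 ∧ fI x = x') ∧
  (∀ c : C, (∃ x' : I', fC c = d' x') → ∃ x : I, d x = c) ∧
  (∀ c' : C', ∃ (c : C) (x' : I'), c' = fC c + d' x')

/-- Every morphism in the category `Corr_adm(R₁, R₂)` of
admissible correspondences between `R₁, R₂ ∈ DGRings^{0,-1}` is an
isomorphism, i.e. `Corr_adm(R₁, R₂)` is a groupoid.  Here a correspondence
`R₁ ←f– R₁₂ –g→ R₂` is admissible if `f` is a quasi-isomorphism and
`R₁₂^{-1} → R₁^{-1} × R₂^{-1}` is an isomorphism; a morphism of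
correspondences is a map `h : R₁₂ → R₁₂'` commuting with the legs, and being
an isomorphism means both components of `h` are bijective. -/
theorem corr_adm_isGroupoid
    -- `R₁ = (C₁, I₁, d₁)`, `R₂ = (C₂, I₂, d₂)` :
    (C1 I1 : Type) [CommRing C1] [AddCommGroup I1] [Module C1 I1]
    (d1 : I1 →ₗ[C1] C1) (hq1 : ∀ x y : I1, d1 x • y = d1 y • x)
    (C2 I2 : Type) [CommRing C2] [AddCommGroup I2] [Module C2 I2]
    (d2 : I2 →ₗ[C2] C2) (hq2 : ∀ x y : I2, d2 x • y = d2 y • x)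
    -- the two correspondences `R₁₂`, `R₁₂'` :
    (C12 I12 : Type) [CommRing C12] [AddCommGroup I12] [Module C12 I12]
    (d12 : I12 →ₗ[C12] C12) (hq12 : ∀ x y : I12, d12 x • y = d12 y • x)
    (C12' I12' : Type) [CommRing C12'] [AddCommGroup I12'] [Module C12' I12']
    (d12' : I12' →ₗ[C12'] C12') (hq12' : ∀ x y : I12', d12' x • y = d12' y • x)
    -- legs of the first correspondence:
    (fC : C12 →+* C1) (fI : I12 →+ I1) (hf : IsDGHom d12 d1 fC fI)
    (gC : C12 →+* C2) (gI : I12 →+ I2) (hg : IsDGHom d12 d2 gC gI)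
    -- legs of the second correspondence:
    (fC' : C12' →+* C1) (fI' : I12' →+ I1) (hf' : IsDGHom d12' d1 fC' fI')
    (gC' : C12' →+* C2) (gI' : I12' →+ I2) (hg' : IsDGHom d12' d2 gC' gI')
    -- both correspondences are admissible:
    (hadm : IsQuasiIso d12 d1 fC fI ∧
      Function.Bijective (fun x : I12 => (fI x, gI x)))
    (hadm' : IsQuasiIso d12' d1 fC' fI' ∧
      Function.Bijective (fun x : I12' => (fI' x, gI' x)))
    -- a morphism of correspondences `h : R₁₂ → R₁₂'` :
    (hC : C12 →+* C12') (hI : I12 →+ I12') (hh : IsDGHom d12 d12' hC hI)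
    (hcommf : ∀ c, fC' (hC c) = fC c) (hcommfI : ∀ x, fI' (hI x) = fI x)
    (hcommg : ∀ c, gC' (hC c) = gC c) (hcommgI : ∀ x, gI' (hI x) = gI x) :
    Function.Bijective hC ∧ Function.Bijective hI := by

  obtain ⟨⟨hki, hks, hci, hcs⟩, hbij⟩ := hadm
  obtain ⟨⟨hki', hks', hci', hcs'⟩, hbij'⟩ := hadm'
  -- hI is bijective
  have hIinj : Function.Injective hI := by
    intro a b hab
    have : (fun x : I12 => (fI x, gI x)) a = (fun x : I12 => (fI x, gI x)) b := by
      simp only [← hcommfI, ← hcommgI, hab]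
    exact hbij.1 this
  have hIsurj : Function.Surjective hI := by
    intro y
    obtain ⟨x, hx⟩ := hbij.2 ((fI' y, gI' y))
    refine ⟨x, hbij'.1 ?_⟩
    simpa [hcommfI, hcommgI] using hx
  -- hC injective
  have hCzero : ∀ c : C12, hC c = 0 → c = 0 := by
    intro c hc
    have hfc : fC c = 0 := by rw [← hcommf c, hc, map_zero]
    obtain ⟨x, hx⟩ := hci c ⟨0, by rw [hfc, map_zero]⟩
    have hdfx : d1 (fI x) = 0 := by rw [hf.2, hx, hfc]
    obtain ⟨y, hdy, hfy⟩ := hks (fI x) hdfx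
    have hw : hI (x - y) = 0 := by
      apply hki' _
      · rw [hh.2, map_sub, hx, hdy, sub_zero, hc]
      · rw [hcommfI, map_sub, hfy, sub_self]
    have hxy : x - y = 0 := hIinj (by rw [hw, map_zero])
    rw [← hx, sub_eq_zero.mp hxy, hdy]
  have hCinj : Function.Injective hC := by
    intro a b hab
    have := hCzero (a - b) (by rw [map_sub, hab, sub_self])
    exact sub_eq_zero.mp this
  have hCsurj : Function.Surjective hC := by
    intro c'
    obtain ⟨c, x1, hcx⟩ := hcs (fC' c')
    obtain ⟨x', hx'⟩ := hci' (c' - hC c) ⟨x1, by rw [map_sub, hcommf, hcx, add_sub_cancel_left]⟩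
    obtain ⟨z, hz⟩ := hIsurj x'
    refine ⟨c + d12 z, ?_⟩
    rw [map_add, ← hh.2, hz, hx', add_sub_cancel]
  exact ⟨⟨hCinj, hCsurj⟩, hIinj, hIsurj⟩
end

section
/- Given a butterfly diagram (a ring R_12^0 with ring maps f^0 : R_12^0 → R_1^0, g^0 : R_12^0 → R_2^0 and module maps h_1 : R_1^{-1} → R_12^0, h_2 : R_2^{-1} → R_12^0, with the NE-SW sequence 0 → R_2^{-1} →h_2 R_12^0 →f^0 R_1^0 → 0 exact), any morphism of butterflies (a ring map R_12^0 → R'^0_12 commuting with all four structure maps) is an isomorphism. -/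
/-- Fix `R₁, R₂ ∈ DGRings^{0,-1}` (so `Rᵢ⁰` is a commutative
ring, `Rᵢ⁻¹` an `Rᵢ⁰`-module with differential `dᵢ` satisfying the quasi-ideal
condition).  A *butterfly* is a commutative ring `B⁰` with ring maps
`f⁰ : B⁰ → R₁⁰`, `g⁰ : B⁰ → R₂⁰` and additive maps `h₁ : R₁⁻¹ → B⁰`,
`h₂ : R₂⁻¹ → B⁰` which are `B⁰`-linear (via `f⁰` resp. `g⁰`), such that
`f⁰ ∘ h₁ = d₁`, `g⁰ ∘ h₂ = d₂`, the NW–SE sequence `R₁⁻¹ → B⁰ → R₂⁰` is a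
complex (`g⁰ ∘ h₁ = 0`), and the NE–SW sequence
`0 → R₂⁻¹ →h₂ B⁰ →f⁰ R₁⁰ → 0` is exact.  Then any morphism of butterflies —
a ring map `t : B⁰ → B'⁰` commuting with all four structure maps — is an
isomorphism (bijective). -/
theorem butterfly_morphism_is_iso
    -- `R₁` and `R₂`:
    (R10 M1 : Type) [CommRing R10] [AddCommGroup M1] [Module R10 M1]
    (d1 : M1 →ₗ[R10] R10) (hq1 : ∀ x y : M1, d1 x • y = d1 y • x)
    (R20 M2 : Type) [CommRing R20] [AddCommGroup M2] [Module R20 M2]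
    (d2 : M2 →ₗ[R20] R20) (hq2 : ∀ x y : M2, d2 x • y = d2 y • x)
    -- first butterfly `B`:
    (B0 : Type) [CommRing B0]
    (f0 : B0 →+* R10) (g0 : B0 →+* R20) (h1 : M1 →+ B0) (h2 : M2 →+ B0)
    (hlin1 : ∀ (b : B0) (x : M1), h1 (f0 b • x) = b * h1 x)
    (hlin2 : ∀ (b : B0) (y : M2), h2 (g0 b • y) = b * h2 y)
    (hcomm1 : ∀ x : M1, f0 (h1 x) = d1 x)
    (hcomm2 : ∀ y : M2, g0 (h2 y) = d2 y)
    (hcplx : ∀ x : M1, g0 (h1 x) = 0)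
    (hinj : Function.Injective h2)
    (hker : ∀ b : B0, f0 b = 0 ↔ ∃ y : M2, h2 y = b)
    (hsurj : Function.Surjective f0)
    -- second butterfly `B'`:
    (B0' : Type) [CommRing B0']
    (f0' : B0' →+* R10) (g0' : B0' →+* R20) (h1' : M1 →+ B0') (h2' : M2 →+ B0')
    (hlin1' : ∀ (b : B0') (x : M1), h1' (f0' b • x) = b * h1' x)
    (hlin2' : ∀ (b : B0') (y : M2), h2' (g0' b • y) = b * h2' y)
    (hcomm1' : ∀ x : M1, f0' (h1' x) = d1 x)
    (hcomm2' : ∀ y : M2, g0' (h2' y) = d2 y)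
    (hcplx' : ∀ x : M1, g0' (h1' x) = 0)
    (hinj' : Function.Injective h2')
    (hker' : ∀ b : B0', f0' b = 0 ↔ ∃ y : M2, h2' y = b)
    (hsurj' : Function.Surjective f0')
    -- a morphism of butterflies `t : B → B'`:
    (t : B0 →+* B0')
    (ht1 : ∀ x : M1, t (h1 x) = h1' x)
    (ht2 : ∀ y : M2, t (h2 y) = h2' y)
    (htf : ∀ b : B0, f0' (t b) = f0 b)
    (htg : ∀ b : B0, g0' (t b) = g0 b) :
    Function.Bijective t := by
  constructor
  · -- injectivity
    intro a b hab
    have h0 : t (a - b) = 0 := by simp [map_sub, hab]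
    have hf : f0 (a - b) = 0 := by rw [← htf, h0, map_zero]
    obtain ⟨y, hy⟩ := (hker (a - b)).mp hf
    have : h2' y = 0 := by rw [← ht2, hy, h0]
    have hy0 : y = 0 := hinj' (by simpa using this)
    have : a - b = 0 := by rw [← hy, hy0, map_zero]
    exact sub_eq_zero.mp this
  · -- surjectivity
    intro b'
    obtain ⟨b, hb⟩ := hsurj (f0' b')
    have hf : f0' (b' - t b) = 0 := by rw [map_sub, htf, hb, sub_self]
    obtain ⟨y, hy⟩ := (hker' (b' - t b)).mp hf
    exact ⟨b + h2 y, by rw [map_add, ht2, hy]; ring⟩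
end

section
/- Let R_1 ←f− R_12 −g→ R_2 be a weakly admissible correspondence in DGRings^{0,-1} (f a quasi-isomorphism and R_12^{-1} → R_1^{-1} × R_2^{-1} surjective). Then f is surjective and Ker f is an acyclic complex. -/
/-- Let `R₁ ←f– R₁₂ –g→ R₂` be a weakly admissible
correspondence in `DGRings^{0,-1}`: `f` is a quasi-isomorphism and
`R₁₂^{-1} → R₁^{-1} × R₂^{-1}` is surjective.  Then `f` is surjective (in
both degrees) and `Ker f` (the DG ideal `{x : f x = 0}`) is acyclic:
its cohomology vanishes in degrees `-1` and `0`. -/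
theorem weakly_admissible_surjective_acyclic_kernel
    (C1 I1 : Type) [CommRing C1] [AddCommGroup I1] [Module C1 I1]
    (d1 : I1 →ₗ[C1] C1) (hq1 : ∀ x y : I1, d1 x • y = d1 y • x)
    (C2 I2 : Type) [CommRing C2] [AddCommGroup I2] [Module C2 I2]
    (d2 : I2 →ₗ[C2] C2) (hq2 : ∀ x y : I2, d2 x • y = d2 y • x)
    (C12 I12 : Type) [CommRing C12] [AddCommGroup I12] [Module C12 I12]
    (d12 : I12 →ₗ[C12] C12) (hq12 : ∀ x y : I12, d12 x • y = d12 y • x)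
    (fC : C12 →+* C1) (fI : I12 →+ I1) (hf : IsDGHom d12 d1 fC fI)
    (gC : C12 →+* C2) (gI : I12 →+ I2) (hg : IsDGHom d12 d2 gC gI)
    -- weak admissibility:
    (hqiso : IsQuasiIso d12 d1 fC fI)
    (hsurj : Function.Surjective (fun x : I12 => (fI x, gI x))) :
    -- `f` is surjective:
    Function.Surjective fC ∧ Function.Surjective fI ∧
    -- `H^{-1}(Ker f) = 0`:
    (∀ x : I12, fI x = 0 → d12 x = 0 → x = 0) ∧
    -- `H^{0}(Ker f) = 0`:
    (∀ c : C12, fC c = 0 → ∃ x : I12, fI x = 0 ∧ d12 x = c) := by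
  obtain ⟨hsmul, hd⟩ := hf
  obtain ⟨h1, h2, h3, h4⟩ := hqiso
  have hfI : Function.Surjective fI := by
    intro x1
    obtain ⟨x, hx⟩ := hsurj (x1, gI 0)
    exact ⟨x, congrArg Prod.fst hx⟩
  have hfC : Function.Surjective fC := by
    intro c1
    obtain ⟨c, x', hcx⟩ := h4 c1
    obtain ⟨x, hx⟩ := hfI x'
    refine ⟨c + d12 x, ?_⟩
    rw [map_add, ← hd, hx, hcx]
  refine ⟨hfC, hfI, fun x a b => h1 x b a, ?_⟩
  intro c hc
  obtain ⟨x, hx⟩ := h3 c ⟨0, by rw [hc, map_zero]⟩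
  have hdfx : d1 (fI x) = 0 := by rw [hd, hx, hc]
  obtain ⟨y, hy0, hyx⟩ := h2 (fI x) hdfx
  refine ⟨x - y, ?_, ?_⟩
  · rw [map_sub, hyx, sub_self]
  · rw [map_sub, hy0, sub_zero, hx]
end

section
/- Let φ : R_1 → R_2 be a morphism in DGRings^{0,-1}. Define R_12^0 := R_1^0 × R_2^{-1} as an additive group with multiplication (x,y)(x',y') := (xx', φ^0(x)y' + φ^0(x')y + (dy)·y'). Then R_12^0 is a commutative ring, f^0(x,y) := x and g^0(x,y) := φ^0(x) + dy are ring homomorphisms, σ(x) := (x,0) is a ring homomorphism splitting f^0, and the sequence 0 → R_2^{-1} →h_2 R_12^0 →f^0 R_1^0 → 0 with h_2(y) := (0,y) is exact. -/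
/-- The multiplication on `R₁₂⁰ := R₁⁰ × R₂⁻¹` associated to a morphism
`φ : R₁ → R₂` in `DGRings^{0,-1}`:
`(x, y) · (x', y') := (x x', φ⁰(x) y' + φ⁰(x') y + (d y) · y')`. -/
def bmul {C1 : Type} [CommRing C1] {C2 I2 : Type} [CommRing C2]
    [AddCommGroup I2] [Module C2 I2] (d2 : I2 →ₗ[C2] C2) (φ0 : C1 →+* C2)
    (p q : C1 × I2) : C1 × I2 :=
  (p.1 * q.1, φ0 p.1 • q.2 + φ0 q.1 • p.2 + d2 p.2 • q.2)

/-- Let `φ : R₁ → R₂` be a morphism in `DGRings^{0,-1}`.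
With `R₁₂⁰ := R₁⁰ × R₂⁻¹` equipped with componentwise addition and the
multiplication `bmul` above, `R₁₂⁰` is a commutative ring with unit `(1, 0)`;
`f⁰ (x, y) := x` and `g⁰ (x, y) := φ⁰ x + d y` are ring homomorphisms;
`σ x := (x, 0)` is a ring homomorphism splitting `f⁰`; and the sequence
`0 → R₂⁻¹ →h₂ R₁₂⁰ →f⁰ R₁⁰ → 0` with `h₂ y := (0, y)` is exact. -/
theorem butterfly_of_morphism
    (C1 I1 : Type) [CommRing C1] [AddCommGroup I1] [Module C1 I1]
    (d1 : I1 →ₗ[C1] C1) (hq1 : ∀ x y : I1, d1 x • y = d1 y • x)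
    (C2 I2 : Type) [CommRing C2] [AddCommGroup I2] [Module C2 I2]
    (d2 : I2 →ₗ[C2] C2) (hq2 : ∀ x y : I2, d2 x • y = d2 y • x)
    (φ0 : C1 →+* C2) (φm : I1 →+ I2)
    (hsm : ∀ (c : C1) (x : I1), φm (c • x) = φ0 c • φm x)
    (hdc : ∀ x : I1, d2 (φm x) = φ0 (d1 x)) :
    -- `R₁₂⁰` is a commutative ring:
    (∀ p q : C1 × I2, bmul d2 φ0 p q = bmul d2 φ0 q p) ∧
    (∀ p q r : C1 × I2,
      bmul d2 φ0 (bmul d2 φ0 p q) r = bmul d2 φ0 p (bmul d2 φ0 q r)) ∧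
    (∀ p q r : C1 × I2,
      bmul d2 φ0 p (q + r) = bmul d2 φ0 p q + bmul d2 φ0 p r) ∧
    (∀ p : C1 × I2, bmul d2 φ0 (1, 0) p = p) ∧
    -- `f⁰` is a (multiplicative) ring homomorphism:
    (∀ p q : C1 × I2, (bmul d2 φ0 p q).1 = p.1 * q.1) ∧
    -- `g⁰` is a (multiplicative) ring homomorphism:
    (∀ p q : C1 × I2,
      φ0 (bmul d2 φ0 p q).1 + d2 (bmul d2 φ0 p q).2
        = (φ0 p.1 + d2 p.2) * (φ0 q.1 + d2 q.2)) ∧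
    -- `σ` is a ring homomorphism splitting `f⁰`:
    (∀ x x' : C1, bmul d2 φ0 (x, 0) (x', 0) = (x * x', 0)) ∧
    (∀ x : C1, ((x, (0 : I2)) : C1 × I2).1 = x) ∧
    -- exactness of `0 → R₂⁻¹ →h₂ R₁₂⁰ →f⁰ R₁⁰ → 0`:
    Function.Injective (fun y : I2 => (((0 : C1), y) : C1 × I2)) ∧
    (∀ p : C1 × I2, p.1 = 0 ↔ ∃ y : I2, ((0 : C1), y) = p) ∧
    Function.Surjective (fun p : C1 × I2 => p.1) := by
  refine ⟨?_, ?_, ?_, ?_, ?_, ?_, ?_, ?_, ?_, ?_, ?_⟩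
  · intro p q
    simp only [bmul, Prod.mk.injEq]
    exact ⟨mul_comm _ _, by rw [hq2 p.2 q.2]; abel⟩
  · rintro ⟨p1,p2⟩ ⟨q1,q2⟩ ⟨r1,r2⟩
    refine Prod.ext (by simp [bmul]; ring) ?_
    simp only [bmul, map_add, map_smul, smul_add, smul_smul, smul_eq_mul, map_mul]
    module
  · rintro ⟨p1,p2⟩ ⟨q1,q2⟩ ⟨r1,r2⟩
    refine Prod.ext (by simp [bmul]; ring) ?_
    simp only [bmul, Prod.snd_add, Prod.fst_add, map_add, add_smul, smul_add]
    abel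
  · intro p
    simp [bmul]
  · intro p q; rfl
  · intro p q
    simp only [bmul, map_mul, map_add, map_smul, smul_eq_mul]
    ring
  · intro x x'
    simp [bmul]
  · intro x; rfl
  · intro a b h
    simpa using congrArg Prod.snd h
  · intro p
    constructor
    · intro h; exact ⟨p.2, by ext <;> simp [h.symm]⟩
    · rintro ⟨y, rfl⟩; rfl
  · intro x; exact ⟨(x, 0), rfl⟩
end

section
/- Let R_1 ←f− R_12 −g→ R_2 be an admissible correspondence in DGRings^{0,-1}. Then the restriction map from splittings s : R_1 → R_12 of f in DGRings^{0,-1} (DG ring maps with f∘s = id) to ring-homomorphism splittings σ : R_1^0 → R_12^0 of f^0 (with f^0∘σ = id), given by s ↦ s^0, is a bijection. -/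
/-- Let `R₁ ←f– R₁₂ –g→ R₂` be an admissible correspondence
in `DGRings^{0,-1}` (`f` a surjective quasi-isomorphism, and
`R₁₂⁻¹ → R₁⁻¹ × R₂⁻¹` an isomorphism).  Then restriction `s ↦ s⁰` is a
bijection from the set of splittings `s : R₁ → R₁₂` of `f` in
`DGRings^{0,-1}` to the set of ring-homomorphism splittings
`σ : R₁⁰ → R₁₂⁰` of `f⁰`: for every such `σ` there is a unique DG splitting
`s` with `s⁰ = σ`. -/
theorem splittings_bijection
    (C1 I1 : Type) [CommRing C1] [AddCommGroup I1] [Module C1 I1]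
    (d1 : I1 →ₗ[C1] C1) (hq1 : ∀ x y : I1, d1 x • y = d1 y • x)
    (C2 I2 : Type) [CommRing C2] [AddCommGroup I2] [Module C2 I2]
    (d2 : I2 →ₗ[C2] C2) (hq2 : ∀ x y : I2, d2 x • y = d2 y • x)
    (C12 I12 : Type) [CommRing C12] [AddCommGroup I12] [Module C12 I12]
    (d12 : I12 →ₗ[C12] C12) (hq12 : ∀ x y : I12, d12 x • y = d12 y • x)
    (fC : C12 →+* C1) (fI : I12 →+ I1) (hf : IsDGHom d12 d1 fC fI)
    (gC : C12 →+* C2) (gI : I12 →+ I2) (hg : IsDGHom d12 d2 gC gI)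
    -- admissibility (with `f` a surjective quasi-isomorphism):
    (hfsurjC : Function.Surjective fC) (hfsurjI : Function.Surjective fI)
    (hqiso : IsQuasiIso d12 d1 fC fI)
    (hbij : Function.Bijective (fun x : I12 => (fI x, gI x))) :
    ∀ σ : C1 →+* C12, (∀ c : C1, fC (σ c) = c) →
      ∃! s : (C1 →+* C12) × (I1 →+ I12),
        (IsDGHom d1 d12 s.1 s.2 ∧
          (∀ c : C1, fC (s.1 c) = c) ∧ (∀ x : I1, fI (s.2 x) = x)) ∧
        s.1 = σ := by
  intro σ hσ
  have uniq : ∀ y y' : I12, fI y = fI y' → d12 y = d12 y' → y = y' := by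
    intro y y' h1 h2
    have h := hqiso.1 (y - y') (by simp [map_sub, h2]) (by simp [map_sub, h1])
    exact sub_eq_zero.mp h
  have exu : ∀ x : I1, ∃ y : I12, fI y = x ∧ d12 y = σ (d1 x) := by
    intro x
    obtain ⟨y0, hy0⟩ := hfsurjI x
    have hc : fC (d12 y0 - σ (d1 x)) = 0 := by
      simp [map_sub, ← hf.2 y0, hy0, hσ]
    obtain ⟨z, hz⟩ := hqiso.2.2.1 (d12 y0 - σ (d1 x)) ⟨0, by simp [hc]⟩
    have hdz : d1 (fI z) = 0 := by rw [hf.2, hz, hc]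
    obtain ⟨u, hu1, hu2⟩ := hqiso.2.1 (fI z) hdz
    refine ⟨y0 - (z - u), ?_, ?_⟩
    · simp [map_sub, hy0, hu2]
    · simp [map_sub, hz, hu1]
  classical
  let F : I1 → I12 := fun x => (exu x).choose
  have hF1 : ∀ x, fI (F x) = x := fun x => (exu x).choose_spec.1
  have hF2 : ∀ x, d12 (F x) = σ (d1 x) := fun x => (exu x).choose_spec.2
  have hFu : ∀ (x : I1) (y : I12), fI y = x → d12 y = σ (d1 x) → y = F x := by
    intro x y h1 h2
    exact uniq y (F x) (by rw [h1, hF1]) (by rw [h2, hF2])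
  let sI : I1 →+ I12 :=
    { toFun := F
      map_zero' := (hFu 0 0 (by simp) (by simp)).symm
      map_add' := by
        intro a b
        refine (hFu (a + b) (F a + F b) ?_ ?_).symm
        · simp [hF1]
        · simp [hF2, map_add] }
  have hsmul : ∀ (c : C1) (x : I1), sI (c • x) = σ c • sI x := by
    intro c x
    refine (hFu (c • x) (σ c • F x) ?_ ?_).symm
    · rw [hf.1, hσ, hF1]
    · rw [map_smul, hF2, map_smul, smul_eq_mul, smul_eq_mul, map_mul]
  refine ⟨(σ, sI), ⟨⟨⟨hsmul, hF2⟩, hσ, hF1⟩, rfl⟩, ?_⟩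
  rintro ⟨sC', sI'⟩ ⟨⟨hdg, hsC, hsI⟩, hC⟩
  dsimp at hC
  subst hC
  refine Prod.ext rfl ?_
  ext x
  exact hFu x (sI' x) (hsI x) (hdg.2 x)
end
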